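/- If A is a G_δ* set in a topological space X, i.e. A = ⋂_{n∈ℕ} A_n where each A_n is a co-zero set, then there exists a function f : X → [0,1] which is a pointwise limit of a sequence of continuous functions and satisfies A = f⁻¹({0}). -/

import Mathlib

open Filter Topology

/-- A set is a co-zero set if it is `g ⁻¹' (0,1]` for some continuous `g : X → [0,1]`. -/
def IsCozeroSet {X : Type*} [TopologicalSpace X] (A : Set X) : Prop :=
  ∃ g : X → ℝ, Continuous g ∧ (∀ x, g x ∈ Set.Icc (0:ℝ) 1) ∧ A = g ⁻¹' Set.Ioc (0:ℝ) 1

/-- If `A` is a countable intersection of co-zero sets, then `A = f ⁻¹' {0}` for a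
function `f : X → [0,1]` of the first Baire class. -/
theorem gdelta_star_eq_zero_set_of_baire_one {X : Type*} [TopologicalSpace X]
    (A : Set X) (B : ℕ → Set X) (hB : ∀ n, IsCozeroSet (B n))
    (hA : A = ⋂ n, B n) :
    ∃ f : X → ℝ, (∀ x, f x ∈ Set.Icc (0:ℝ) 1) ∧
      (∃ g : ℕ → X → ℝ, (∀ k, Continuous (g k)) ∧
        ∀ x, Filter.Tendsto (fun k => g k x) Filter.atTop (nhds (f x))) ∧
      A = f ⁻¹' {0} := by
  choose g hgc hgm hgB using hB
  have hg0 : ∀ n x, 0 ≤ g n x := fun n x => (hgm n x).1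
  have hg1 : ∀ n x, g n x ≤ 1 := fun n x => (hgm n x).2
  set c : ℕ → ℝ := fun n => (2:ℝ)⁻¹ ^ (n+1) with hc
  have hcpos : ∀ n, 0 < c n := fun n => by positivity
  have hcsum : Summable c := by
    have : Summable fun n : ℕ => (2:ℝ)⁻¹ ^ n :=
      summable_geometric_of_lt_one (by norm_num) (by norm_num)
    simpa [hc, pow_succ, mul_comm] using this.mul_right (2:ℝ)⁻¹
  have hctsum : ∑' n, c n = 1 := by
    have := tsum_geometric_two' (1:ℝ)
    have hce : ∀ n, c n = 1 / 2 / 2 ^ n := by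
      intro n; show (2:ℝ)⁻¹ ^ (n+1) = 1 / 2 / 2 ^ n; field_simp [pow_succ]; ring_nf; rw [← mul_pow]; norm_num
    rw [tsum_congr hce]; exact this
  set h : ℕ → X → ℝ := fun n x => if g n x = 0 then 1 else 0 with hh
  have hh01 : ∀ n x, 0 ≤ h n x ∧ h n x ≤ 1 := by
    intro n x; constructor <;> simp [hh] <;> split <;> norm_num
  set f : X → ℝ := fun x => ∑' n, c n * h n x with hf
  have hsumf : ∀ x, Summable fun n => c n * h n x := by
    intro x
    apply Summable.of_nonneg_of_le (fun n => by
      have := (hh01 n x).1; positivity) (fun n => ?_) hcsum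
    have := (hh01 n x).2
    nlinarith [ (hcpos n).le]
  set G : ℕ → X → ℝ := fun k x => ∑' n, c n * (1 - g n x) ^ k with hG
  have hpowmem : ∀ n x k, 0 ≤ (1 - g n x) ^ k ∧ (1 - g n x) ^ k ≤ 1 := by
    intro n x k
    constructor
    · exact pow_nonneg (by linarith [hg1 n x]) k
    · exact pow_le_one₀ (by linarith [hg1 n x]) (by linarith [hg0 n x])
  refine ⟨f, ?_, ⟨G, ?_, ?_⟩, ?_⟩
  · intro x
    constructor
    · exact tsum_nonneg fun n => mul_nonneg (hcpos n).le (hh01 n x).1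
    · calc f x ≤ ∑' n, c n := by
            apply Summable.tsum_le_tsum (fun n => ?_) (hsumf x) hcsum
            nlinarith [(hh01 n x).2, (hcpos n).le]
        _ = 1 := hctsum
  · intro k
    apply continuous_tsum (u := c) (fun n => ?_) hcsum (fun n x => ?_)
    · exact (continuous_const.mul (((continuous_const.sub (hgc n)).pow k)))
    · rw [Real.norm_eq_abs, abs_mul, abs_of_nonneg (hcpos n).le,
        abs_of_nonneg (hpowmem n x k).1]
      nlinarith [(hpowmem n x k).2, (hcpos n).le]
  · intro x
    apply tendsto_tsum_of_dominated_convergence hcsum (fun n => ?_)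
      (Filter.Eventually.of_forall fun k n => ?_)
    · by_cases hz : g n x = 0
      · simp only [hz, sub_zero, one_pow, hh, if_pos hz, mul_one]
        exact tendsto_const_nhds
      · have hpos : 0 < g n x := lt_of_le_of_ne (hg0 n x) (Ne.symm hz)
        have : Tendsto (fun k => (1 - g n x) ^ k) atTop (𝓝 0) := by
          apply tendsto_pow_atTop_nhds_zero_of_abs_lt_one
          rw [abs_lt]; constructor <;> [linarith [hg1 n x]; linarith]
        simpa [hh, hz] using this.const_mul (c n)
    · rw [Real.norm_eq_abs, abs_mul, abs_of_nonneg (hcpos n).le,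
        abs_of_nonneg (hpowmem n x k).1]
      nlinarith [(hpowmem n x k).2, (hcpos n).le]
  · ext x
    have hmem : x ∈ A ↔ ∀ n, 0 < g n x := by
      rw [hA, Set.mem_iInter]
      constructor
      · intro hx n
        have := hx n; rw [hgB n] at this; exact this.1
      · intro hx n
        rw [hgB n]; exact ⟨hx n, hg1 n x⟩
    rw [hmem]
    simp only [Set.mem_preimage, Set.mem_singleton_iff]
    constructor
    · intro hx
      have : ∀ n, c n * h n x = 0 := by
        intro n
        have : h n x = 0 := by simp [hh, (hx n).ne']
        simp [this]
      simp only [hf]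
      rw [tsum_congr this, tsum_zero]
    · intro hfx n
      by_contra hcon
      have hz : g n x = 0 := by
        push_neg at hcon
        exact le_antisymm hcon (hg0 n x)
      have hterm : c n * h n x = c n := by simp [hh, hz]
      have hle : c n * h n x ≤ f x := by
        apply Summable.le_tsum (hsumf x) n (fun m _ => mul_nonneg (hcpos m).le (hh01 m x).1)
      rw [hterm, hfx] at hle
      exact absurd hle (not_le.mpr (hcpos n))
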